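/- Let G be a permutation group on Ω and B a partition of Ω. Let H ≤ Sym(Ω) be the subgroup of all permutations fixing every part of B setwise. If G is join-coherent then G ∩ H is join-coherent, and if G is meet-coherent then G ∩ H is meet-coherent. -/

import Mathlib

/-- The orbit partition of a permutation `g`, as a setoid on `Ω`. -/
def piPart {Ω : Type*} (g : Equiv.Perm Ω) : Setoid Ω :=
  MulAction.orbitRel (Subgroup.zpowers g) Ω

/-- The set of orbit partitions of elements of a permutation group `G`. -/
def piSet {Ω : Type*} (G : Subgroup (Equiv.Perm Ω)) : Set (Setoid Ω) :=
  {P | ∃ g ∈ G, piPart g = P}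

/-- `G` is join-coherent if its set of orbit partitions is closed under joins. -/
def JoinCoherent {Ω : Type*} (G : Subgroup (Equiv.Perm Ω)) : Prop :=
  ∀ P ∈ piSet G, ∀ Q ∈ piSet G, P ⊔ Q ∈ piSet G

/-- `G` is meet-coherent if its set of orbit partitions is closed under meets. -/
def MeetCoherent {Ω : Type*} (G : Subgroup (Equiv.Perm Ω)) : Prop :=
  ∀ P ∈ piSet G, ∀ Q ∈ piSet G, P ⊓ Q ∈ piSet G

open Pointwise in
lemma piPart_le_iff_fixes_classes {Ω : Type*} (g : Equiv.Perm Ω) (B : Setoid Ω) :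
    piPart g ≤ B ↔ ∀ c ∈ B.classes, (⇑g) '' c = c := by
  constructor
  · intro hle c hc
    obtain ⟨a, rfl⟩ := hc
    apply subset_antisymm
    · rintro _ ⟨z, hz, rfl⟩
      exact B.trans (hle (show piPart g (g z) z from
        ⟨⟨g, Subgroup.mem_zpowers g⟩, rfl⟩)) hz
    · intro z hz
      refine ⟨g⁻¹ z, ?_, by simp⟩
      refine B.trans (hle (show piPart g (g⁻¹ z) z from
        ⟨⟨g⁻¹, Subgroup.inv_mem _ (Subgroup.mem_zpowers g)⟩, rfl⟩)) hz
  · intro hfix x y hxy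
    obtain ⟨u, rfl⟩ := hxy
    set c : Set Ω := {z | B z y} with hc
    have hcc : c ∈ B.classes := ⟨y, rfl⟩
    have hgc : g • c = c := by
      exact hfix c hcc
    have hstab : g ∈ MulAction.stabilizer (Equiv.Perm Ω) c := hgc
    have huc : (u : Equiv.Perm Ω) • c = c := by
      have : (u : Equiv.Perm Ω) ∈ MulAction.stabilizer (Equiv.Perm Ω) c := by
        have hle : Subgroup.zpowers g ≤ MulAction.stabilizer (Equiv.Perm Ω) c :=
          (Subgroup.zpowers_le).mpr hstab
        exact hle u.2
      exact this
    have hy : y ∈ c := B.refl y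
    have : (u : Equiv.Perm Ω) y ∈ c := by
      rw [← huc]
      exact ⟨y, hy, rfl⟩
    exact this

theorem coherent_inter_partStabilizer {Ω : Type*} (G H : Subgroup (Equiv.Perm Ω))
    (B : Setoid Ω)
    (hH : ∀ g : Equiv.Perm Ω, g ∈ H ↔ ∀ c ∈ B.classes, (⇑g) '' c = c) :
    (JoinCoherent G → JoinCoherent (G ⊓ H)) ∧
    (MeetCoherent G → MeetCoherent (G ⊓ H)) := by
  have key : ∀ g : Equiv.Perm Ω, g ∈ H ↔ piPart g ≤ B := fun g =>
    (hH g).trans (piPart_le_iff_fixes_classes g B).symm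
  constructor
  · intro hG P hP Q hQ
    obtain ⟨g, hg, rfl⟩ := hP
    obtain ⟨h, hh, rfl⟩ := hQ
    obtain ⟨hgG, hgH⟩ := Subgroup.mem_inf.mp hg
    obtain ⟨hhG, hhH⟩ := Subgroup.mem_inf.mp hh
    obtain ⟨k, hkG, hk⟩ := hG _ ⟨g, hgG, rfl⟩ _ ⟨h, hhG, rfl⟩
    refine ⟨k, Subgroup.mem_inf.mpr ⟨hkG, ?_⟩, hk⟩
    rw [key, hk]
    exact sup_le ((key g).mp hgH) ((key h).mp hhH)
  · intro hG P hP Q hQ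
    obtain ⟨g, hg, rfl⟩ := hP
    obtain ⟨h, hh, rfl⟩ := hQ
    obtain ⟨hgG, hgH⟩ := Subgroup.mem_inf.mp hg
    obtain ⟨hhG, hhH⟩ := Subgroup.mem_inf.mp hh
    obtain ⟨k, hkG, hk⟩ := hG _ ⟨g, hgG, rfl⟩ _ ⟨h, hhG, rfl⟩
    refine ⟨k, Subgroup.mem_inf.mpr ⟨hkG, ?_⟩, hk⟩
    rw [key, hk]
    exact le_trans inf_le_left ((key g).mp hgH)
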